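/- The set E := {(λ, 2λ) : λ ∈ ℤ, λ ≥ 0} ∪ {(2λ, λ) : λ ∈ ℤ, λ ≥ 0} ⊆ ℝ² is not MILP-representable. -/

import Mathlib

/-- `S ⊆ ℝ^n` is the projection of a mixed-integer linear set. -/
def MILPRepresentable {n : ℕ} (S : Set (Fin n → ℝ)) : Prop :=
  ∃ (m p q : ℕ) (A : Matrix (Fin m) (Fin n) ℚ) (B : Matrix (Fin m) (Fin p) ℚ)
    (C : Matrix (Fin m) (Fin q) ℚ) (d : Fin m → ℚ),
    S = {x | ∃ (y : Fin p → ℝ) (z : Fin q → ℤ), ∀ i : Fin m,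
      (d i : ℝ) ≤ (∑ j, (A i j : ℝ) * x j) + (∑ j, (B i j : ℝ) * y j)
        + (∑ j, (C i j : ℝ) * (z j : ℝ))}

/-- The set `E = {(λ,2λ) : λ ∈ ℤ₊} ∪ {(2λ,λ) : λ ∈ ℤ₊} ⊆ ℝ²`
is not MILP-representable. -/

-- Dickson pair lemma
lemma dickson_pair {m : ℕ} (u : ℕ → Fin m → ℕ) :
    ∃ k l, k < l ∧ ∀ i, u k i ≤ u l i := by
  have hPWO : ∀ m : ℕ, (Set.univ : Set (Fin m → ℕ)).IsPWO := by
    intro m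
    induction m with
    | zero => exact Set.isPWO_of_finite
    | succ m ih =>
      have h1 : (Set.univ : Set ℕ).IsPWO :=
        (Set.isWF_univ_iff.2 ⟨wellFounded_lt⟩).isPWO
      have hprod := h1.prod ih
      have hmono : Monotone (fun p : ℕ × (Fin m → ℕ) => (Fin.cons p.1 p.2 : Fin (m+1) → ℕ)) := by
        intro p q hpq
        intro i
        refine Fin.cases ?_ ?_ i
        · simpa using hpq.1
        · intro j; simpa using hpq.2 j
      have himg := hprod.image_of_monotone hmono
      have heq : ((fun p : ℕ × (Fin m → ℕ) => (Fin.cons p.1 p.2 : Fin (m+1) → ℕ)) ''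
          ((Set.univ : Set ℕ) ×ˢ (Set.univ : Set (Fin m → ℕ)))) = Set.univ := by
        ext f
        simp only [Set.mem_image, Set.mem_univ, iff_true, Set.mem_prod]
        exact ⟨(f 0, fun j => f j.succ), ⟨trivial, trivial⟩, by
          funext i; refine Fin.cases rfl (fun j => rfl) i⟩
      rw [heq] at himg
      exact himg
  obtain ⟨k, l, hkl, hle⟩ := hPWO m (fun n => ⟨u n, Set.mem_univ _⟩)
  exact ⟨k, l, hkl, hle⟩


lemma elim1 {ι₀ : Type} [Fintype ι₀] {κ : Type} [Fintype κ] (U : ι₀ → κ → ℚ) (c d : ι₀ → ℚ) :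
    ∃ (ι : Type) (_ : Fintype ι) (U' : ι → κ → ℚ) (d' : ι → ℚ),
      ∀ v : κ → ℝ,
        ((∃ t : ℝ, ∀ i, (d i : ℝ) ≤ (∑ a, (U i a : ℝ) * v a) + (c i : ℝ) * t) ↔
         (∀ i', (d' i' : ℝ) ≤ ∑ a, (U' i' a : ℝ) * v a)) := by
  classical
  refine ⟨ι₀ × ι₀, inferInstance,
    (fun p a => if 0 < c p.1 ∧ c p.2 < 0 then c p.1 * U p.2 a - c p.2 * U p.1 a
      else if c p.1 = 0 ∧ p.1 = p.2 then U p.1 a else 0),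
    (fun p => if 0 < c p.1 ∧ c p.2 < 0 then c p.1 * d p.2 - c p.2 * d p.1
      else if c p.1 = 0 ∧ p.1 = p.2 then d p.1 else 0), ?_⟩
  intro v
  set R : ι₀ → ℝ := fun i => ∑ a, (U i a : ℝ) * v a with hR
  have hsum : ∀ i j : ι₀, (∑ a, ((c i * U j a - c j * U i a : ℚ) : ℝ) * v a)
      = (c i : ℝ) * R j - (c j : ℝ) * R i := by
    intro i j
    rw [hR]
    rw [Finset.mul_sum, Finset.mul_sum, ← Finset.sum_sub_distrib]
    refine Finset.sum_congr rfl fun a _ => by push_cast; ring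
  constructor
  · rintro ⟨t, ht⟩ ⟨i, j⟩
    by_cases h1 : 0 < c i ∧ c j < 0
    · simp only [if_pos h1]
      rw [hsum i j]
      have hci : (0:ℝ) < (c i : ℝ) := by exact_mod_cast h1.1
      have hcj : ((c j : ℝ)) < 0 := by exact_mod_cast h1.2
      have hi := ht i
      have hj := ht j
      have e1 := mul_le_mul_of_nonneg_left hi (by linarith : (0:ℝ) ≤ -((c j : ℝ)))
      have e2 := mul_le_mul_of_nonneg_left hj hci.le
      push_cast
      nlinarith [e1, e2]
    · by_cases h2 : c i = 0 ∧ i = j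
      · simp only [if_neg h1, if_pos h2]
        have hi := ht i
        rw [h2.1] at hi
        push_cast at hi ⊢
        obtain rfl := h2.2
        linarith
      · simp only [if_neg h1, if_neg h2]
        push_cast
        simp
  · intro h
    -- build t
    set L : Finset ι₀ := Finset.univ.filter (fun i => 0 < c i) with hL
    set Us : Finset ι₀ := Finset.univ.filter (fun i => c i < 0) with hUs
    have key : ∀ j, 0 < c j → ∀ i, c i < 0 →
        ((d j : ℝ) - R j)/(c j : ℝ) ≤ ((d i : ℝ) - R i)/(c i : ℝ) := by
      intro j hj i hi
      have hrow := h (j, i)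
      simp only [if_pos (show 0 < c j ∧ c i < 0 from ⟨hj, hi⟩)] at hrow
      rw [hsum j i] at hrow
      push_cast at hrow
      have hcj : (0:ℝ) < (c j : ℝ) := by exact_mod_cast hj
      have hci : ((c i : ℝ)) < 0 := by exact_mod_cast hi
      have hrw : ((d i : ℝ) - R i)/(c i : ℝ) = ((R i - (d i:ℝ)))/(-(c i : ℝ)) := by
        rw [div_eq_div_iff (by linarith) (by linarith)]; ring
      rw [hrw, div_le_div_iff₀ hcj (by linarith : (0:ℝ) < -((c i : ℝ)))]
      nlinarith [hrow]
    have main : ∃ t : ℝ, ∀ i, (d i : ℝ) ≤ R i + (c i : ℝ) * t := by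
      rcases Finset.eq_empty_or_nonempty L with hLe | hLn
      · rcases Finset.eq_empty_or_nonempty Us with hUe | hUn
        · refine ⟨0, fun i => ?_⟩
          have hc0 : c i = 0 := by
            by_contra hc
            rcases lt_or_gt_of_ne hc with hlt | hgt
            · have : i ∈ Us := by simp [hUs, hlt]
              rw [hUe] at this; simp at this
            · have : i ∈ L := by simp [hL, hgt]
              rw [hLe] at this; simp at this
          have hrow := h (i, i)
          simp [hc0] at hrow
          rw [hc0]
          push_cast
          simpa [hR] using hrow
        · -- L empty, Us nonempty : t := min over Us
          set img := Us.image (fun i => ((d i : ℝ) - R i)/(c i : ℝ)) with himg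
          have himgne : img.Nonempty := hUn.image _
          refine ⟨img.min' himgne, fun i => ?_⟩
          rcases lt_trichotomy (c i) 0 with hlt | heq | hgt
          · have hmem : ((d i : ℝ) - R i)/(c i : ℝ) ∈ img := by
              rw [himg]; exact Finset.mem_image_of_mem _ (by simp [hUs, hlt])
            have hle := Finset.min'_le img _ hmem
            have hci : ((c i : ℝ)) < 0 := by exact_mod_cast hlt
            have := mul_le_mul_of_nonpos_left hle (le_of_lt hci)
            rw [mul_div_cancel₀ _ (ne_of_lt hci)] at this
            linarith
          · have hrow := h (i, i)
            simp [heq] at hrow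
            rw [heq]; push_cast; simpa [hR] using hrow
          · exfalso
            have : i ∈ L := by simp [hL, hgt]
            rw [hLe] at this; simp at this
      · -- L nonempty : t := max over L
        set img := L.image (fun i => ((d i : ℝ) - R i)/(c i : ℝ)) with himg
        have himgne : img.Nonempty := hLn.image _
        refine ⟨img.max' himgne, fun i => ?_⟩
        rcases lt_trichotomy (c i) 0 with hlt | heq | hgt
        · have hci : ((c i : ℝ)) < 0 := by exact_mod_cast hlt
          have hle : img.max' himgne ≤ ((d i : ℝ) - R i)/(c i : ℝ) := by
            apply Finset.max'_le
            intro x hx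
            rw [himg, Finset.mem_image] at hx
            obtain ⟨j, hjL, rfl⟩ := hx
            have hj : 0 < c j := by
              rw [hL] at hjL; simpa using hjL
            exact key j hj i hlt
          have := mul_le_mul_of_nonpos_left hle (le_of_lt hci)
          rw [mul_div_cancel₀ _ (ne_of_lt hci)] at this
          linarith
        · have hrow := h (i, i)
          simp [heq] at hrow
          rw [heq]; push_cast; simpa [hR] using hrow
        · have hci : (0:ℝ) < (c i : ℝ) := by exact_mod_cast hgt
          have hmem : ((d i : ℝ) - R i)/(c i : ℝ) ∈ img := by
            rw [himg]; exact Finset.mem_image_of_mem _ (by simp [hL, hgt])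
          have hle := Finset.le_max' img _ hmem
          have := mul_le_mul_of_nonneg_left hle (le_of_lt hci)
          rw [mul_div_cancel₀ _ (ne_of_gt hci)] at this
          linarith
    obtain ⟨t, ht⟩ := main
    exact ⟨t, fun i => ht i⟩

lemma elimAll {κ : Type} [Fintype κ] :
    ∀ (p : ℕ) {ι₀ : Type} [Fintype ι₀] (U : ι₀ → κ → ℚ) (B : ι₀ → Fin p → ℚ) (d : ι₀ → ℚ),
    ∃ (ι : Type) (_ : Fintype ι) (U' : ι → κ → ℚ) (d' : ι → ℚ),
      ∀ v : κ → ℝ,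
        ((∃ y : Fin p → ℝ, ∀ i, (d i : ℝ) ≤ (∑ a, (U i a : ℝ) * v a) + ∑ k, (B i k : ℝ) * y k) ↔
         (∀ i', (d' i' : ℝ) ≤ ∑ a, (U' i' a : ℝ) * v a)) := by
  intro p
  induction p with
  | zero =>
    intro ι₀ _ U B d
    refine ⟨ι₀, inferInstance, U, d, fun v => ?_⟩
    constructor
    · rintro ⟨y, hy⟩ i
      simpa using hy i
    · intro h
      exact ⟨fun k => 0, fun i => by simpa using h i⟩
  | succ p ih =>
    intro ι₀ _ U B d
    obtain ⟨ι₁, hι₁, U₁, d₁, h₁⟩ := elim1 (κ := κ ⊕ Fin p)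
      (fun i => Sum.elim (U i) (fun k : Fin p => B i k.succ)) (fun i => B i 0) d
    obtain ⟨ι₂, hι₂, U₂, d₂, h₂⟩ := @ih ι₁ hι₁
      (fun i₁ => fun a => U₁ i₁ (Sum.inl a)) (fun i₁ k => U₁ i₁ (Sum.inr k)) d₁
    refine ⟨ι₂, hι₂, U₂, d₂, fun v => ?_⟩
    rw [← h₂ v]
    have hsum1 : ∀ (y' : Fin p → ℝ) (i : ι₀),
        (∑ a : κ ⊕ Fin p, ((Sum.elim (U i) (fun k : Fin p => B i k.succ) a : ℚ) : ℝ)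
          * (Sum.elim v y') a)
        = (∑ a, (U i a : ℝ) * v a) + ∑ k, (B i k.succ : ℝ) * y' k := by
      intro y' i
      rw [Fintype.sum_sum_type]
      simp
    have hsum2 : ∀ (y' : Fin p → ℝ) (i₁ : ι₁),
        (∑ a : κ ⊕ Fin p, ((U₁ i₁ a : ℚ) : ℝ) * (Sum.elim v y') a)
        = (∑ a, (U₁ i₁ (Sum.inl a) : ℝ) * v a) + ∑ k, (U₁ i₁ (Sum.inr k) : ℝ) * y' k := by
      intro y' i₁
      rw [Fintype.sum_sum_type]
      simp
    constructor
    · rintro ⟨y, hy⟩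
      refine ⟨fun k => y k.succ, fun i₁ => ?_⟩
      have hmp := (h₁ (Sum.elim v (fun k => y k.succ))).mp ⟨y 0, fun i => ?_⟩
      · have := hmp i₁
        rw [hsum2] at this
        exact this
      · rw [hsum1]
        have := hy i
        rw [Fin.sum_univ_succ] at this
        linarith
    · rintro ⟨y', hy'⟩
      have hmpr := (h₁ (Sum.elim v y')).mpr (fun i₁ => ?_)
      · obtain ⟨t, ht⟩ := hmpr
        refine ⟨Fin.cons t y', fun i => ?_⟩
        have := ht i
        rw [hsum1] at this
        rw [Fin.sum_univ_succ]
        simp only [Fin.cons_zero, Fin.cons_succ]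
        linarith
      · rw [hsum2]
        exact hy' i₁

theorem E_not_milp_representable :
    ¬ MILPRepresentable {x : Fin 2 → ℝ |
        (∃ lam : ℤ, 0 ≤ lam ∧ x 0 = (lam : ℝ) ∧ x 1 = 2 * (lam : ℝ)) ∨
        (∃ lam : ℤ, 0 ≤ lam ∧ x 0 = 2 * (lam : ℝ) ∧ x 1 = (lam : ℝ))} := by
  classical
  rintro ⟨m, p, q, A, B, C, d, hS⟩
  obtain ⟨ι, hι, T, d', hT⟩ := elimAll (κ := Fin 2 ⊕ Fin q) p
    (fun i => Sum.elim (fun j => A i j) (fun k => C i k)) (fun i k => B i k) d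
  set Eset : Set (Fin 2 → ℝ) := {x : Fin 2 → ℝ |
        (∃ lam : ℤ, 0 ≤ lam ∧ x 0 = (lam : ℝ) ∧ x 1 = 2 * (lam : ℝ)) ∨
        (∃ lam : ℤ, 0 ≤ lam ∧ x 0 = 2 * (lam : ℝ) ∧ x 1 = (lam : ℝ))} with hEset
  set val : (Fin 2 → ℝ) → (Fin q → ℤ) → ι → ℝ :=
    fun x z i => (∑ j, (T i (Sum.inl j) : ℝ) * x j)
      + ∑ k, (T i (Sum.inr k) : ℝ) * (z k : ℝ) with hval
  -- bridge
  have hbridge : ∀ (x : Fin 2 → ℝ) (z : Fin q → ℤ),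
      ((∃ y : Fin p → ℝ, ∀ i, (d i : ℝ) ≤ (∑ j, (A i j : ℝ) * x j) + (∑ j, (B i j : ℝ) * y j)
          + (∑ j, (C i j : ℝ) * (z j : ℝ))) ↔ (∀ i', (d' i' : ℝ) ≤ val x z i')) := by
    intro x z
    set v : (Fin 2 ⊕ Fin q) → ℝ := Sum.elim x (fun k => (z k : ℝ)) with hv
    have hrow : ∀ i, (∑ a, ((Sum.elim (fun j => A i j) (fun k => C i k) a : ℚ) : ℝ) * v a)
        = (∑ j, (A i j : ℝ) * x j) + ∑ k, (C i k : ℝ) * (z k : ℝ) := by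
      intro i
      rw [Fintype.sum_sum_type]
      simp [hv]
    have hrowT : ∀ i', (∑ a, ((T i' a : ℚ) : ℝ) * v a) = val x z i' := by
      intro i'
      rw [hval, Fintype.sum_sum_type]
      simp [hv]
    constructor
    · rintro ⟨y, hy⟩ i'
      rw [← hrowT i']
      refine (hT v).mp ⟨y, fun i => ?_⟩ i'
      rw [hrow i]
      have := hy i
      linarith
    · intro h
      obtain ⟨y, hy⟩ := (hT v).mpr (fun i' => by rw [hrowT i']; exact h i')
      refine ⟨y, fun i => ?_⟩
      have := hy i
      rw [hrow i] at this
      linarith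
  have hmem : ∀ x : Fin 2 → ℝ, x ∈ Eset ↔ ∃ z : Fin q → ℤ, ∀ i', (d' i' : ℝ) ≤ val x z i' := by
    intro x
    constructor
    · intro hx
      rw [hS] at hx
      obtain ⟨y, z, h⟩ := hx
      exact ⟨z, (hbridge x z).mp ⟨y, h⟩⟩
    · rintro ⟨z, h⟩
      obtain ⟨y, hy⟩ := (hbridge x z).mpr h
      rw [hS]
      exact ⟨y, z, hy⟩
  -- witnesses
  have hxaE : ∀ n : ℕ, (![(n:ℝ), 2*(n:ℝ)]) ∈ Eset := by
    intro n
    left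
    exact ⟨(n:ℤ), Int.ofNat_nonneg n, by push_cast; simp, by push_cast; simp⟩
  have hxbE : (![(2:ℝ), (1:ℝ)]) ∈ Eset := by
    right
    exact ⟨1, by norm_num, by norm_num, by norm_num⟩
  have hzaex : ∀ n : ℕ, ∃ z, ∀ i', (d' i' : ℝ) ≤ val ![(n:ℝ), 2*(n:ℝ)] z i' :=
    fun n => (hmem _).mp (hxaE n)
  choose za hza using hzaex
  obtain ⟨zb, hzb⟩ := (hmem _).mp hxbE
  -- rational values
  set Fq : ℕ → ι → ℚ := fun n i => (T i (Sum.inl 0) * (n:ℚ) + T i (Sum.inl 1) * (2*(n:ℚ)))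
      + ∑ k, T i (Sum.inr k) * (za n k : ℚ) with hFqdef
  have hFq : ∀ (n : ℕ) (i : ι), ((Fq n i : ℚ) : ℝ) = val ![(n:ℝ), 2*(n:ℝ)] (za n) i := by
    intro n i
    rw [hval, hFqdef]
    simp only [Fin.sum_univ_two, Matrix.cons_val_zero, Matrix.cons_val_one, Matrix.head_cons]
    push_cast
    ring
  have hgeq : ∀ n i, d' i ≤ Fq n i := by
    intro n i
    have h := hza n i
    rw [← hFq n i] at h
    exact_mod_cast h
  -- denominators
  set D : ℕ := ∏ i : ι, ((d' i).den * ((∏ j, (T i (Sum.inl j)).den) * ∏ k, (T i (Sum.inr k)).den))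
    with hDdef
  have hD0 : 0 < D := by
    refine Finset.prod_pos fun i _ => ?_
    refine Nat.pos_of_ne_zero ?_
    refine mul_ne_zero (Rat.den_ne_zero _) (mul_ne_zero ?_ ?_) <;>
    · rw [Finset.prod_ne_zero_iff]
      exact fun j _ => Rat.den_ne_zero _
  have hmulint : ∀ (r : ℚ), r.den ∣ D → ∃ w : ℤ, (w:ℚ) = (D:ℚ) * r := by
    intro r hdvd
    obtain ⟨e, he⟩ := hdvd
    refine ⟨r.num * e, ?_⟩
    have hd : ((r.den : ℚ)) ≠ 0 := Nat.cast_ne_zero.mpr (Rat.den_ne_zero r)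
    have hnum : (r.num : ℚ) = r * (r.den : ℚ) := (div_eq_iff hd).mp (Rat.num_div_den r)
    rw [he]
    push_cast
    rw [hnum]
    ring
  have hdvd_d : ∀ i, (d' i).den ∣ D :=
    fun i => dvd_trans (dvd_mul_right _ _) (Finset.dvd_prod_of_mem _ (Finset.mem_univ i))
  have hdvd_A : ∀ i j, (T i (Sum.inl j)).den ∣ D := by
    intro i j
    refine dvd_trans (dvd_trans
      (Finset.dvd_prod_of_mem (fun j => (T i (Sum.inl j)).den) (Finset.mem_univ j)) ?_)
      (Finset.dvd_prod_of_mem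
        (fun i => ((d' i).den * ((∏ j, (T i (Sum.inl j)).den) * ∏ k, (T i (Sum.inr k)).den)))
        (Finset.mem_univ i))
    exact dvd_trans (dvd_mul_right _ _) (dvd_mul_left _ _)
  have hdvd_C : ∀ i k, (T i (Sum.inr k)).den ∣ D := by
    intro i k
    refine dvd_trans (dvd_trans
      (Finset.dvd_prod_of_mem (fun k => (T i (Sum.inr k)).den) (Finset.mem_univ k)) ?_)
      (Finset.dvd_prod_of_mem
        (fun i => ((d' i).den * ((∏ j, (T i (Sum.inl j)).den) * ∏ k, (T i (Sum.inr k)).den)))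
        (Finset.mem_univ i))
    exact dvd_trans (dvd_mul_left _ _) (dvd_mul_left _ _)
  set R : Subring ℚ := (Int.castRingHom ℚ).range with hRdef
  have hmm : ∀ (r : ℚ), r.den ∣ D → ((D:ℚ) * r) ∈ R := by
    intro r h
    obtain ⟨w, hw⟩ := hmulint r h
    exact ⟨w, hw⟩
  have hFqint : ∀ n i, ((D:ℚ) * Fq n i) ∈ R := by
    intro n i
    rw [hFqdef]
    simp only []
    rw [mul_add, mul_add, Finset.mul_sum]
    refine Subring.add_mem _ (Subring.add_mem _ ?_ ?_) (Subring.sum_mem _ fun k _ => ?_)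
    · rw [← mul_assoc]
      exact Subring.mul_mem _ (hmm _ (hdvd_A i 0)) ⟨(n:ℤ), by rw [eq_intCast]; norm_cast⟩
    · rw [← mul_assoc]
      exact Subring.mul_mem _ (hmm _ (hdvd_A i 1)) ⟨2*(n:ℤ), by rw [eq_intCast]; push_cast; ring⟩
    · rw [← mul_assoc]
      exact Subring.mul_mem _ (hmm _ (hdvd_C i k)) ⟨za n k, by rw [eq_intCast]⟩
  have hdint : ∀ i, ((D:ℚ) * d' i) ∈ R := fun i => hmm _ (hdvd_d i)
  have hFqint' : ∀ (n : ℕ) (i : ι), ∃ w : ℤ, (w:ℚ) = (D:ℚ) * Fq n i := fun n i => hFqint n i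
  have hdint' : ∀ i : ι, ∃ w : ℤ, (w:ℚ) = (D:ℚ) * d' i := fun i => hdint i
  choose g hg using hFqint'
  choose gd hgd using hdint'
  -- Dickson
  set e : ι ≃ Fin (Fintype.card ι) := Fintype.equivFin ι with he
  obtain ⟨k, l, hkl, hle⟩ := dickson_pair (fun n i => (g n (e.symm i) - gd (e.symm i)).toNat)
  have hgd_le : ∀ (n : ℕ) (i : ι), gd i ≤ g n i := by
    intro n i
    have h1 : (D:ℚ) * d' i ≤ (D:ℚ) * Fq n i :=
      mul_le_mul_of_nonneg_left (hgeq n i) (by positivity)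
    rw [← hg, ← hgd] at h1
    exact_mod_cast h1
  have hFmon : ∀ i : ι, Fq k i ≤ Fq l i := by
    intro i
    have h1 := hle (e i)
    rw [Equiv.symm_apply_apply] at h1
    have h2 : g k i - gd i ≤ g l i - gd i := by
      have hk0 : 0 ≤ g k i - gd i := sub_nonneg.mpr (hgd_le k i)
      have hl0 : 0 ≤ g l i - gd i := sub_nonneg.mpr (hgd_le l i)
      calc g k i - gd i = ((g k i - gd i).toNat : ℤ) := (Int.toNat_of_nonneg hk0).symm
        _ ≤ ((g l i - gd i).toNat : ℤ) := by exact_mod_cast h1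
        _ = g l i - gd i := Int.toNat_of_nonneg hl0
    have h3 : g k i ≤ g l i := by linarith
    have h4 : (D:ℚ) * Fq k i ≤ (D:ℚ) * Fq l i := by
      rw [← hg, ← hg]
      exact_mod_cast h3
    have hD : (0:ℚ) < (D:ℚ) := by positivity
    exact le_of_mul_le_mul_left h4 hD
  -- final point
  set dr : ℝ := (l:ℝ) - (k:ℝ) with hdr
  have hdr1 : (1:ℝ) ≤ dr := by
    rw [hdr]
    have : (k:ℝ) + 1 ≤ (l:ℝ) := by exact_mod_cast Nat.succ_le_of_lt hkl
    linarith
  set xs : Fin 2 → ℝ := ![2 + dr, 1 + 2*dr] with hxs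
  set zs : Fin q → ℤ := fun t => zb t + (za l t - za k t) with hzs
  have hsplit : ∀ i, val xs zs i = val ![(2:ℝ), (1:ℝ)] zb i
      + (val ![(l:ℝ), 2*(l:ℝ)] (za l) i - val ![(k:ℝ), 2*(k:ℝ)] (za k) i) := by
    intro i
    rw [hval]
    simp only [Fin.sum_univ_two, Matrix.cons_val_zero, Matrix.cons_val_one, Matrix.head_cons,
      hxs, hzs]
    have hterm : ∀ t, (T i (Sum.inr t) : ℝ) * ((zb t + (za l t - za k t) : ℤ) : ℝ)
        = (T i (Sum.inr t) : ℝ) * (zb t : ℝ) + ((T i (Sum.inr t) : ℝ) * (za l t : ℝ)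
          - (T i (Sum.inr t) : ℝ) * (za k t : ℝ)) := by
      intro t
      push_cast
      ring
    rw [Finset.sum_congr rfl (fun t _ => hterm t), Finset.sum_add_distrib,
      Finset.sum_sub_distrib, hdr]
    ring
  have hxsmem : xs ∈ Eset := by
    refine (hmem xs).mpr ⟨zs, fun i => ?_⟩
    rw [hsplit i]
    have h1 := hzb i
    have h2 : (Fq k i : ℝ) ≤ (Fq l i : ℝ) := by exact_mod_cast hFmon i
    rw [hFq l i, hFq k i] at h2
    linarith
  -- contradiction
  rw [hEset] at hxsmem
  have hx0 : xs 0 = 2 + dr := by rw [hxs]; norm_num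
  have hx1 : xs 1 = 1 + 2*dr := by rw [hxs]; norm_num
  rcases hxsmem with ⟨lam, _, h1, h2⟩ | ⟨lam, _, h1, h2⟩
  · rw [hx0] at h1
    rw [hx1] at h2
    linarith
  · rw [hx0] at h1
    rw [hx1] at h2
    linarith
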